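/- Lemma 3.7 (*-connectedness of the inner boundary). Let A ⊂ ℤ^d be a finite connected set whose complement ℤ^d ∖ A is connected. Then ∂(A^c) is *-connected: any two sites x, y ∈ ∂(A^c) can be joined by a path of sites lying in ∂(A^c) whose individual steps connect only pairs of sites of ℤ^d at Euclidean distance not exceeding √2. -/

import Mathlib

open scoped BigOperators Classical
noncomputable section

/-- Sites of the lattice `ℤ^d`. -/
abbrev Site (d : ℕ) := Fin d → ℤ

/-- Nearest-neighbour adjacency on `ℤ^d`. -/
def adjZ {d : ℕ} (x y : Site d) : Prop := (∑ i, (x i - y i).natAbs) = 1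

/-- A path inside the set `A` using the adjacency relation `adj`. -/
def pathIn {X : Type*} (adj : X → X → Prop) (A : Set X) (x y : X) : Prop :=
  Relation.ReflTransGen (fun u v => adj u v ∧ u ∈ A ∧ v ∈ A) x y

/-- `A` is a connected set of sites: any two of its sites are joined by a
nearest-neighbour path inside it. -/
def connectedIn {X : Type*} (adj : X → X → Prop) (A : Set X) : Prop :=
  ∀ x ∈ A, ∀ y ∈ A, pathIn adj A x y

/-- `∂(Aᶜ)`: the set of sites of `A` at distance one from the complement of `A`. -/
def innerBd {d : ℕ} (A : Set (Site d)) : Set (Site d) :=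
  {x | x ∈ A ∧ ∃ y, y ∉ A ∧ adjZ x y}

namespace SC
variable {d : ℕ}

/-- unit vector -/
def ee (k : Fin d) : Site d := Pi.single k 1

@[simp] lemma ee_apply (k m : Fin d) : ee k m = if m = k then 1 else 0 := by
  simp [ee, Pi.single_apply]

lemma adjZ_single (u : Site d) (k : Fin d) (c : ℤ) (hc : c = 1 ∨ c = -1) :
    adjZ u (u + c • ee k) := by
  unfold adjZ
  have : ∀ m, ((u m - (u + c • ee k) m).natAbs) = if m = k then 1 else 0 := by
    intro m
    by_cases h : m = k <;> rcases hc with rfl | rfl <;>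
      simp [h, Pi.smul_apply, ee_apply]
  rw [Finset.sum_congr rfl (fun m _ => this m)]
  simp

lemma adjZ_iff {u v : Site d} :
    adjZ u v ↔ ∃ k, v = u + ee k ∨ v = u - ee k := by
  constructor
  · intro h
    unfold adjZ at h
    have hex : ∃ k, (u k - v k).natAbs ≠ 0 := by
      by_contra hc
      push_neg at hc
      simp only [Finset.sum_congr rfl (fun m _ => hc m), Finset.sum_const_zero] at h
      omega
    obtain ⟨k, hk⟩ := hex
    have hk1 : (u k - v k).natAbs = 1 := by
      have h1 : (u k - v k).natAbs ≤ ∑ i, (u i - v i).natAbs :=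
        Finset.single_le_sum (f := fun i => (u i - v i).natAbs) (by intros; positivity)
          (Finset.mem_univ k)
      omega
    have hrest : ∀ m, m ≠ k → (u m - v m).natAbs = 0 := by
      intro m hm
      rw [← Finset.sum_erase_add Finset.univ _ (Finset.mem_univ k)] at h
      have h2 : ∑ i ∈ Finset.univ.erase k, (u i - v i).natAbs = 0 := by omega
      have := Finset.sum_eq_zero_iff.mp h2 m (by simp [hm])
      exact this
    refine ⟨k, ?_⟩
    have hcase : u k - v k = 1 ∨ u k - v k = -1 := by omega
    rcases hcase with h1 | h1
    · right; funext m
      by_cases hm : m = k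
      · subst hm; simp [ee_apply]; omega
      · have := hrest m hm; simp [ee_apply, hm]; omega
    · left; funext m
      by_cases hm : m = k
      · subst hm; simp [ee_apply]; omega
      · have := hrest m hm; simp [ee_apply, hm]; omega
  · rintro ⟨k, rfl | rfl⟩
    · have := adjZ_single u k 1 (Or.inl rfl); simpa using this
    · have := adjZ_single u k (-1) (Or.inr rfl); simpa [sub_eq_add_neg] using this

def sq2 (u v : Site d) : ℤ := ∑ i, (u i - v i) ^ 2

lemma sq2_square {i j : Fin d} (hij : i ≠ j) (b : Site d) (a₁ a₂ b₁ b₂ : ℤ)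
    (h1 : |a₁ - b₁| ≤ 1) (h2 : |a₂ - b₂| ≤ 1) :
    sq2 (b + a₁ • ee i + a₂ • ee j) (b + b₁ • ee i + b₂ • ee j) ≤ 2 := by
  unfold sq2
  have : ∀ m, ((b + a₁ • ee i + a₂ • ee j) m - (b + b₁ • ee i + b₂ • ee j) m) ^ 2
      = (a₁ - b₁) ^ 2 * (if m = i then 1 else 0) + (a₂ - b₂) ^ 2 * (if m = j then 1 else 0) := by
    intro m
    by_cases hi : m = i <;> by_cases hj : m = j
    · exact absurd (hi ▸ hj ▸ rfl : i = j) hij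
    · simp only [hi, hj, Pi.add_apply, Pi.smul_apply, ee_apply, if_true, if_false,
        if_neg (hij : ¬ i = j), if_pos rfl, smul_eq_mul]
      ring
    · simp only [hi, hj, Pi.add_apply, Pi.smul_apply, ee_apply, if_true, if_false,
        if_neg (hij.symm : ¬ j = i), if_pos rfl, smul_eq_mul]
      ring
    · simp [hi, hj, Pi.smul_apply]
  rw [Finset.sum_congr rfl (fun m _ => this m)]
  rw [Finset.sum_add_distrib, ← Finset.mul_sum, ← Finset.mul_sum]
  simp only [Finset.sum_ite_eq' Finset.univ, Finset.mem_univ, if_true]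
  have e1 : (a₁ - b₁) ^ 2 ≤ 1 := by nlinarith [abs_nonneg (a₁ - b₁), sq_abs (a₁ - b₁)]
  have e2 : (a₂ - b₂) ^ 2 ≤ 1 := by nlinarith [abs_nonneg (a₂ - b₂), sq_abs (a₂ - b₂)]
  nlinarith

-- new: adjacency lemmas
lemma adjZ_symm' {u v : Site d} (h : adjZ u v) : adjZ v u := by
  unfold adjZ at *
  rw [Finset.sum_congr rfl fun m _ => (by omega :
    (v m - u m).natAbs = (u m - v m).natAbs)]
  exact h

lemma adj_ee (u : Site d) (k : Fin d) : adjZ u (u + ee k) := by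
  unfold adjZ
  have : ∀ m, ((u m - (u + ee k) m).natAbs) = if m = k then 1 else 0 := by
    intro m; by_cases h : m = k <;> simp [h]
  rw [Finset.sum_congr rfl (fun m _ => this m)]
  simp


variable (A S : Set (Site d))

def cross (u v : Site d) : Prop := (u ∈ S ∧ v ∉ A) ∨ (v ∈ S ∧ u ∉ A)

def crossZ (u v : Site d) : ZMod 2 := if cross A S u v then 1 else 0

lemma crossZ_symm (u v : Site d) : crossZ A S u v = crossZ A S v u := by
  unfold crossZ cross; rw [or_comm]

def SqEven : Prop := ∀ (b : Site d) (i j : Fin d), i ≠ j →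
  crossZ A S b (b + ee i) + crossZ A S (b + ee i) (b + ee i + ee j)
    + crossZ A S (b + ee i + ee j) (b + ee j) + crossZ A S (b + ee j) b = 0

def nrm (s : Site d) : ℕ := ∑ i, (s i).natAbs

lemma exists_ne_zero {s : Site d} (h : s ≠ 0) : ∃ i, s i ≠ 0 := by
  by_contra hc
  push_neg at hc
  exact h (funext fun i => hc i)

lemma filt_ne {s : Site d} (h : s ≠ 0) :
    (Finset.univ.filter fun i => s i ≠ 0).Nonempty := by
  obtain ⟨i, hi⟩ := exists_ne_zero h
  exact ⟨i, by simp [hi]⟩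

def lix (s : Site d) (h : s ≠ 0) : Fin d :=
  (Finset.univ.filter fun i => s i ≠ 0).min' (filt_ne h)

lemma lix_spec (s : Site d) (h : s ≠ 0) : s (lix s h) ≠ 0 := by
  have := Finset.min'_mem (Finset.univ.filter fun i => s i ≠ 0) (filt_ne h)
  simpa [lix] using this

lemma lix_least (s : Site d) (h : s ≠ 0) {j : Fin d} (hj : j < lix s h) : s j = 0 := by
  by_contra hc
  have hmem : j ∈ Finset.univ.filter fun i => s i ≠ 0 := by simp [hc]
  have hle : lix s h ≤ j := Finset.min'_le _ j hmem
  exact absurd hle (not_le.mpr hj)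

lemma lix_eq (s : Site d) (h : s ≠ 0) (i : Fin d) (hi : s i ≠ 0)
    (hlow : ∀ j, j < i → s j = 0) : lix s h = i := by
  rcases lt_trichotomy (lix s h) i with hlt | heq | hgt
  · exact absurd (hlow _ hlt) (lix_spec s h)
  · exact heq
  · exact absurd (lix_least s h hgt) hi

def T (s : Site d) : Site d :=
  if h : s = 0 then 0 else
    if 0 < s (lix s h) then s - ee (lix s h) else s + ee (lix s h)

lemma nrm_sub (s : Site d) (k : Fin d) (hk : 0 < s k) : nrm (s - ee k) = nrm s - 1 ∧ 1 ≤ nrm s := by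
  have hterm : ∀ m, ((s - ee k) m).natAbs = if m = k then (s m).natAbs - 1 else (s m).natAbs := by
    intro m
    by_cases hm : m = k
    · subst hm; simp; omega
    · simp [hm]
  have h1 : 1 ≤ nrm s := by
    have : (s k).natAbs ≤ nrm s := Finset.single_le_sum (f := fun i => (s i).natAbs)
      (by intros; positivity) (Finset.mem_univ k)
    omega
  constructor
  · unfold nrm
    rw [← Finset.sum_erase_add Finset.univ _ (Finset.mem_univ k),
        ← Finset.sum_erase_add Finset.univ (fun i => (s i).natAbs) (Finset.mem_univ k)]
    have he : ∑ m ∈ Finset.univ.erase k, ((s - ee k) m).natAbs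
        = ∑ m ∈ Finset.univ.erase k, (s m).natAbs := by
      refine Finset.sum_congr rfl fun m hm => ?_
      rw [hterm m, if_neg (Finset.mem_erase.mp hm).1]
    rw [he, hterm k, if_pos rfl]
    have : (s k).natAbs ≥ 1 := by omega
    omega
  · exact h1

lemma nrm_add (s : Site d) (k : Fin d) (hk : s k < 0) : nrm (s + ee k) = nrm s - 1 ∧ 1 ≤ nrm s := by
  have hterm : ∀ m, ((s + ee k) m).natAbs = if m = k then (s m).natAbs - 1 else (s m).natAbs := by
    intro m
    by_cases hm : m = k
    · subst hm; simp; omega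
    · simp [hm]
  have h1 : 1 ≤ nrm s := by
    have : (s k).natAbs ≤ nrm s := Finset.single_le_sum (f := fun i => (s i).natAbs)
      (by intros; positivity) (Finset.mem_univ k)
    omega
  constructor
  · unfold nrm
    rw [← Finset.sum_erase_add Finset.univ _ (Finset.mem_univ k),
        ← Finset.sum_erase_add Finset.univ (fun i => (s i).natAbs) (Finset.mem_univ k)]
    have he : ∑ m ∈ Finset.univ.erase k, ((s + ee k) m).natAbs
        = ∑ m ∈ Finset.univ.erase k, (s m).natAbs := by
      refine Finset.sum_congr rfl fun m hm => ?_
      rw [hterm m, if_neg (Finset.mem_erase.mp hm).1]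
    rw [he, hterm k, if_pos rfl]
    have : (s k).natAbs ≥ 1 := by omega
    omega
  · exact h1

lemma nrm_T (s : Site d) (h : s ≠ 0) : nrm (T s) < nrm s := by
  unfold T
  rw [dif_neg h]
  by_cases hpos : 0 < s (lix s h)
  · rw [if_pos hpos]
    obtain ⟨h1, h2⟩ := nrm_sub s (lix s h) hpos
    omega
  · rw [if_neg hpos]
    have hneg : s (lix s h) < 0 := by
      have := lix_spec s h; omega
    obtain ⟨h1, h2⟩ := nrm_add s (lix s h) hneg
    omega

def F (s : Site d) : ZMod 2 :=
  if h : s = 0 then 0 else crossZ A S s (T s) + F (T s)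
termination_by nrm s
decreasing_by exact nrm_T s h

lemma F_zero : F A S 0 = 0 := by rw [F]; simp

lemma F_ne (s : Site d) (h : s ≠ 0) : F A S s = crossZ A S s (T s) + F A S (T s) := by
  rw [F]; simp [h]

lemma T_eq (s : Site d) (h : s ≠ 0) (i : Fin d) (hi : s i ≠ 0)
    (hlow : ∀ j, j < i → s j = 0) :
    T s = if 0 < s i then s - ee i else s + ee i := by
  unfold T
  rw [dif_neg h, lix_eq s h i hi hlow]

lemma zh1 : ∀ a b : ZMod 2, (a + b) + b = a := by decide
lemma zh2 : ∀ a b : ZMod 2, b + (a + b) = a := by decide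
lemma ztwo : (2 : ZMod 2) = 0 := by decide

lemma CAN (hsq : SqEven A S) :
    ∀ (s : Site d) (k : Fin d), F A S s + F A S (s + ee k) = crossZ A S s (s + ee k) := by
  have main : ∀ (n : ℕ) (s : Site d) (k : Fin d), nrm s = n →
      F A S s + F A S (s + ee k) = crossZ A S s (s + ee k) := by
    intro n
    induction n using Nat.strong_induction_on with
    | _ n IH =>
      intro s k hn
      by_cases hs : s = 0
      · subst hs
        have hek : (0 : Site d) + ee k ≠ 0 := by
          intro hc
          have := congrFun hc k
          simp at this
        have hTek : T ((0 : Site d) + ee k) = 0 := by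
          rw [T_eq _ hek k (by simp) (by intro j hj; simp [Fin.ne_of_lt hj])]
          rw [if_pos (by simp)]
          funext m; by_cases hm : m = k <;> simp [hm]
        rw [F_zero, F_ne A S _ hek, hTek, F_zero, crossZ_symm]
        abel
      · obtain ⟨i, hi, hlow⟩ : ∃ i, s i ≠ 0 ∧ ∀ j, j < i → s j = 0 :=
          ⟨lix s hs, lix_spec s hs, fun j hj => lix_least s hs hj⟩
        rcases lt_trichotomy k i with hki | hki | hki
        · -- k < i : s k = 0, T (s + ee k) = s
          have hsk : s k = 0 := hlow k hki
          have hs' : s + ee k ≠ 0 := by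
            intro hc; have := congrFun hc k; simp [hsk] at this
          have hT' : T (s + ee k) = s := by
            rw [T_eq _ hs' k (by simp [hsk]) ?_]
            · rw [if_pos (by simp [hsk])]
              funext m; by_cases hm : m = k <;> simp [hm]
            · intro j hj
              have : j < i := lt_trans hj hki
              simp [Fin.ne_of_lt hj, hlow j this]
          rw [F_ne A S _ hs', hT', crossZ_symm A S (s + ee k) s]
          exact zh2 _ _
        · -- k = i
          subst hki
          by_cases hpos : 0 < s k
          · have hs' : s + ee k ≠ 0 := by
              intro hc; have := congrFun hc k; simp at this; omega
            have hT' : T (s + ee k) = s := by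
              rw [T_eq _ hs' k (by simp; omega) ?_]
              · rw [if_pos (by simp; omega)]
                funext m; by_cases hm : m = k <;> simp [hm]
              · intro j hj; simp [Fin.ne_of_lt hj, hlow j hj]
            rw [F_ne A S _ hs', hT', crossZ_symm A S (s + ee k) s]
            exact zh2 _ _
          · have hneg : s k < 0 := by
              rcases lt_trichotomy (s k) 0 with h | h | h
              · exact h
              · exact absurd h hi
              · exact absurd h hpos
            have hT : T s = s + ee k := by
              rw [T_eq s hs k hi hlow, if_neg hpos]
            rw [F_ne A S s hs, hT]
            exact zh1 _ _
        · -- i < k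
          have hik : i ≠ k := Fin.ne_of_lt hki
          have hs' : s + ee k ≠ 0 := by
            intro hc; have := congrFun hc i; simp [hik] at this; exact hi this
          have hsi' : (s + ee k) i ≠ 0 := by simp [hik, hi]
          have hlow' : ∀ j, j < i → (s + ee k) j = 0 := by
            intro j hj
            have hjk : j ≠ k := Fin.ne_of_lt (lt_trans hj hki)
            simp [hjk, hlow j hj]
          have hIH : ∀ t : Site d, nrm t < n →
              F A S t + F A S (t + ee k) = crossZ A S t (t + ee k) :=
            fun t ht => IH (nrm t) ht t k rfl
          have hnT : nrm (T s) < n := hn ▸ nrm_T s hs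
          by_cases hpos : 0 < s i
          · have hT : T s = s - ee i := by rw [T_eq s hs i hi hlow, if_pos hpos]
            have hT' : T (s + ee k) = s - ee i + ee k := by
              rw [T_eq _ hs' i hsi' hlow', if_pos (by simp [hik]; omega)]
              funext m
              by_cases hmk : m = k <;> by_cases hmi : m = i <;>
                simp [hmk, hmi] <;> first | (subst hmk; subst hmi; exact absurd rfl hik) | ring
            have IH' := hIH (T s) hnT
            rw [hT] at IH'
            have HSQ := hsq (s - ee i) i k hik
            have e1 : s - ee i + ee i = s := by abel
            rw [e1] at HSQ
            rw [F_ne A S s hs, F_ne A S _ hs', hT, hT']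
            have S1 : crossZ A S s (s - ee i) = crossZ A S (s - ee i) s := crossZ_symm A S _ _
            have S2 : crossZ A S (s - ee i) (s - ee i + ee k)
                = crossZ A S (s - ee i + ee k) (s - ee i) := crossZ_symm A S _ _
            linear_combination IH' + HSQ + S1 + S2 - (crossZ A S s (s + ee k)) * ztwo
          · have hneg : s i < 0 := by
              rcases lt_trichotomy (s i) 0 with h | h | h
              · exact h
              · exact absurd h hi
              · exact absurd h hpos
            have hT : T s = s + ee i := by rw [T_eq s hs i hi hlow, if_neg hpos]
            have hT' : T (s + ee k) = s + ee i + ee k := by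
              rw [T_eq _ hs' i hsi' (by intro j hj; exact hlow' j hj),
                if_neg (by simp [hik]; omega)]
              funext m
              by_cases hmk : m = k <;> by_cases hmi : m = i <;> simp [hmk, hmi] <;> ring
            have IH' := hIH (T s) hnT
            rw [hT] at IH'
            have HSQ := hsq s i k hik
            rw [F_ne A S s hs, F_ne A S _ hs', hT, hT']
            have S1 : crossZ A S (s + ee k) s = crossZ A S s (s + ee k) := crossZ_symm A S _ _
            have S2 : crossZ A S (s + ee k) (s + ee i + ee k)
                = crossZ A S (s + ee i + ee k) (s + ee k) := crossZ_symm A S _ _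
            linear_combination IH' + HSQ + S1 + S2 - (crossZ A S (s + ee k) s) * ztwo
  intro s k
  exact main (nrm s) s k rfl

variable {A S : Set (Site d)}

lemma crossZ_uniform {p q : Site d} (hS : S ⊆ A) (h : p ∈ A ↔ q ∈ A) :
    crossZ A S p q = 0 := by
  unfold crossZ cross
  rw [if_neg]
  rintro (⟨h1, h2⟩ | ⟨h1, h2⟩)
  · exact h2 (h.mp (hS h1))
  · exact h2 (h.mpr (hS h1))

lemma crossZ_bd {p q : Site d} (hS : S ⊆ A) (hp : p ∈ A) (hq : q ∉ A) :
    crossZ A S p q = if p ∈ S then 1 else 0 := by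
  unfold crossZ cross
  congr 1
  simp only [eq_iff_iff]
  constructor
  · rintro (⟨h1, _⟩ | ⟨h1, _⟩)
    · exact h1
    · exact absurd (hS h1) hq
  · intro h; exact Or.inl ⟨h, hq⟩

lemma edge_crossZ {c0 p q : Site d} (hS : S ⊆ A)
    (hadj : adjZ p q)
    (hp : p ∈ innerBd A → (p ∈ S ↔ c0 ∈ S)) (hq : q ∈ innerBd A → (q ∈ S ↔ c0 ∈ S)) :
    crossZ A S p q
      = (if c0 ∈ S then 1 else 0) * ((if p ∈ A then 0 else 1) + (if q ∈ A then 0 else 1)) := by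
  by_cases hpA : p ∈ A <;> by_cases hqA : q ∈ A
  · rw [crossZ_uniform hS (by simp [hpA, hqA]), if_pos hpA, if_pos hqA]
    ring
  · rw [crossZ_bd hS hpA hqA, if_pos hpA, if_neg hqA]
    have hmem : p ∈ innerBd A := ⟨hpA, q, hqA, hadj⟩
    rw [if_congr (hp hmem) rfl rfl]
    ring
  · rw [crossZ_symm, crossZ_bd hS hqA hpA, if_neg hpA, if_pos hqA]
    have hmem : q ∈ innerBd A := ⟨hqA, p, hpA, adjZ_symm' hadj⟩
    rw [if_congr (hq hmem) rfl rfl]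
    ring
  · rw [crossZ_uniform hS (by simp [hpA, hqA]), if_neg hpA, if_neg hqA]
    have : (1 : ZMod 2) + 1 = 0 := by decide
    rw [this, mul_zero]

lemma sqEven_of (hSi : S ⊆ innerBd A)
    (hcl : ∀ p q : Site d, p ∈ innerBd A → q ∈ innerBd A → sq2 p q ≤ 2 → (p ∈ S ↔ q ∈ S)) :
    SqEven A S := by
  have hS : S ⊆ A := fun w hw => (hSi hw).1
  intro b i j hij
  -- corner normal forms
  have n1 : b = b + (0:ℤ) • ee i + (0:ℤ) • ee j := by simp
  have n2 : b + ee i = b + (1:ℤ) • ee i + (0:ℤ) • ee j := by simp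
  have n3 : b + ee i + ee j = b + (1:ℤ) • ee i + (1:ℤ) • ee j := by simp
  have n4 : b + ee j = b + (0:ℤ) • ee i + (1:ℤ) • ee j := by simp
  have hd : ∀ p q : Site d, (∃ a₁ a₂ : ℤ, p = b + a₁ • ee i + a₂ • ee j ∧ (a₁ = 0 ∨ a₁ = 1) ∧ (a₂ = 0 ∨ a₂ = 1)) →
      (∃ a₁ a₂ : ℤ, q = b + a₁ • ee i + a₂ • ee j ∧ (a₁ = 0 ∨ a₁ = 1) ∧ (a₂ = 0 ∨ a₂ = 1)) →
      sq2 p q ≤ 2 := by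
    rintro p q ⟨a₁, a₂, rfl, ha₁, ha₂⟩ ⟨b₁, b₂, rfl, hb₁, hb₂⟩
    refine sq2_square hij b a₁ a₂ b₁ b₂ ?_ ?_
    · rcases ha₁ with rfl | rfl <;> rcases hb₁ with rfl | rfl <;> norm_num
    · rcases ha₂ with rfl | rfl <;> rcases hb₂ with rfl | rfl <;> norm_num
  have w1 : ∃ a₁ a₂ : ℤ, b = b + a₁ • ee i + a₂ • ee j ∧ (a₁ = 0 ∨ a₁ = 1) ∧ (a₂ = 0 ∨ a₂ = 1) :=
    ⟨0, 0, n1, Or.inl rfl, Or.inl rfl⟩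
  have w2 : ∃ a₁ a₂ : ℤ, b + ee i = b + a₁ • ee i + a₂ • ee j ∧ (a₁ = 0 ∨ a₁ = 1) ∧ (a₂ = 0 ∨ a₂ = 1) :=
    ⟨1, 0, n2, Or.inr rfl, Or.inl rfl⟩
  have w3 : ∃ a₁ a₂ : ℤ, b + ee i + ee j = b + a₁ • ee i + a₂ • ee j ∧ (a₁ = 0 ∨ a₁ = 1) ∧ (a₂ = 0 ∨ a₂ = 1) :=
    ⟨1, 1, n3, Or.inr rfl, Or.inr rfl⟩
  have w4 : ∃ a₁ a₂ : ℤ, b + ee j = b + a₁ • ee i + a₂ • ee j ∧ (a₁ = 0 ∨ a₁ = 1) ∧ (a₂ = 0 ∨ a₂ = 1) :=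
    ⟨0, 1, n4, Or.inl rfl, Or.inr rfl⟩
  -- case: all corners uniform
  by_cases huni : (b ∈ A ↔ b + ee i ∈ A) ∧ (b + ee i ∈ A ↔ b + ee i + ee j ∈ A)
      ∧ (b + ee i + ee j ∈ A ↔ b + ee j ∈ A)
  · obtain ⟨u1, u2, u3⟩ := huni
    rw [crossZ_uniform hS u1, crossZ_uniform hS u2, crossZ_uniform hS u3,
      crossZ_uniform hS (u3.symm.trans (u2.symm.trans u1.symm))]
    simp
  · -- some boundary corner c0 exists among the corners
    have hcor : ∃ c0 : Site d, c0 ∈ innerBd A ∧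
        (∃ a₁ a₂ : ℤ, c0 = b + a₁ • ee i + a₂ • ee j ∧ (a₁ = 0 ∨ a₁ = 1) ∧ (a₂ = 0 ∨ a₂ = 1)) := by
      have hsplit : ∀ X Y : Prop, ¬(X ↔ Y) → (X ∧ ¬Y) ∨ (¬X ∧ Y) := fun X Y h => by
        by_cases hX : X
        · exact Or.inl ⟨hX, fun hY => h ⟨fun _ => hY, fun _ => hX⟩⟩
        · by_cases hY : Y
          · exact Or.inr ⟨hX, hY⟩
          · exact absurd ⟨fun hx => (hX hx).elim, fun hy => (hY hy).elim⟩ h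
      by_cases h1 : (b ∈ A ↔ b + ee i ∈ A)
      · by_cases h2 : (b + ee i ∈ A ↔ b + ee i + ee j ∈ A)
        · have h3 : ¬(b + ee i + ee j ∈ A ↔ b + ee j ∈ A) := fun hiff => huni ⟨h1, h2, hiff⟩
          have e34 : b + ee j + ee i = b + ee i + ee j := by abel
          have hadjX : adjZ (b + ee j) (b + ee i + ee j) := by
            rw [← e34]; exact adj_ee (b + ee j) i
          rcases hsplit _ _ h3 with ⟨hin, hout⟩ | ⟨hout, hin⟩
          · exact ⟨b + ee i + ee j, ⟨hin, b + ee j, hout, adjZ_symm' hadjX⟩, w3⟩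
          · exact ⟨b + ee j, ⟨hin, b + ee i + ee j, hout, hadjX⟩, w4⟩
        · rcases hsplit _ _ h2 with ⟨hin, hout⟩ | ⟨hout, hin⟩
          · exact ⟨b + ee i, ⟨hin, b + ee i + ee j, hout, adj_ee _ j⟩, w2⟩
          · exact ⟨b + ee i + ee j, ⟨hin, b + ee i, hout, adjZ_symm' (adj_ee _ j)⟩, w3⟩
      · rcases hsplit _ _ h1 with ⟨hin, hout⟩ | ⟨hout, hin⟩
        · exact ⟨b, ⟨hin, b + ee i, hout, adj_ee b i⟩, w1⟩
        · exact ⟨b + ee i, ⟨hin, b, hout, adjZ_symm' (adj_ee b i)⟩, w2⟩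
    obtain ⟨c0, hc0, hc0w⟩ := hcor
    have heq : ∀ p : Site d,
        (∃ a₁ a₂ : ℤ, p = b + a₁ • ee i + a₂ • ee j ∧ (a₁ = 0 ∨ a₁ = 1) ∧ (a₂ = 0 ∨ a₂ = 1)) →
        p ∈ innerBd A → (p ∈ S ↔ c0 ∈ S) := by
      intro p hw hp
      exact hcl p c0 hp hc0 (hd p c0 hw hc0w)
    have hadj34 : adjZ (b + ee i + ee j) (b + ee j) := by
      have h0 := adjZ_symm' (adj_ee (b + ee j) i)
      have e34 : b + ee j + ee i = b + ee i + ee j := by abel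
      rw [e34] at h0
      exact h0
    rw [edge_crossZ hS (adj_ee b i) (heq _ w1) (heq _ w2),
        edge_crossZ hS (adj_ee (b + ee i) j) (heq _ w2) (heq _ w3),
        edge_crossZ hS hadj34 (heq _ w3) (heq _ w4),
        edge_crossZ hS (adjZ_symm' (adj_ee b j)) (heq _ w4) (heq _ w1)]
    have key : ∀ σ a c e f : ZMod 2,
        σ * (a + c) + σ * (c + e) + σ * (e + f) + σ * (f + a) = 0 := by decide
    exact key _ _ _ _ _

lemma sq2_comm (u v : Site d) : sq2 u v = sq2 v u :=
  Finset.sum_congr rfl fun i _ => by ring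

lemma zeq : ∀ a b : ZMod 2, a + b = 0 → a = b := by decide

lemma Fadj {A S : Set (Site d)} (hsq : SqEven A S) {u v : Site d} (h : adjZ u v) :
    F A S u + F A S v = crossZ A S u v := by
  rcases adjZ_iff.mp h with ⟨k, rfl | rfl⟩
  · exact CAN A S hsq u k
  · have h2 := CAN A S hsq (u - ee k) k
    have e : u - ee k + ee k = u := by abel
    rw [e] at h2
    rw [add_comm] at h2
    rw [h2, crossZ_symm]

lemma F_const {A S : Set (Site d)} (hsq : SqEven A S) {W : Set (Site d)}
    (h0 : ∀ u v : Site d, u ∈ W → v ∈ W → crossZ A S u v = 0)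
    {p q : Site d} (hpq : pathIn adjZ W p q) : F A S p = F A S q := by
  induction hpq with
  | refl => rfl
  | tail _ step ih =>
    obtain ⟨hadj, hu, hv⟩ := step
    have h1 := Fadj hsq hadj
    rw [h0 _ _ hu hv] at h1
    rw [ih, zeq _ _ h1]

end SC

/-- **Lemma 3.7** (*-connectedness of the inner boundary).  If `A ⊆ ℤ^d` is a finite
connected set whose complement is connected, then `∂(Aᶜ)` is *-connected:  any two of
its sites can be joined by a path of sites of `∂(Aᶜ)` whose individual steps join only
pairs of sites of `ℤ^d` with Euclidean distance not exceeding `√2`. -/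
theorem starConnected_innerBoundary {d : ℕ} (A : Set (Site d)) (hfin : A.Finite)
    (hconn : connectedIn adjZ A) (hconnc : connectedIn adjZ Aᶜ) :
    ∀ x ∈ innerBd A, ∀ y ∈ innerBd A,
      Relation.ReflTransGen
        (fun u v : Site d =>
          u ∈ innerBd A ∧ v ∈ innerBd A ∧ (∑ i, (u i - v i) ^ 2) ≤ 2) x y := by
  intro x hx y hy
  set S : Set (Site d) :=
    {w | w ∈ innerBd A ∧ Relation.ReflTransGen
      (fun u v : Site d =>
        u ∈ innerBd A ∧ v ∈ innerBd A ∧ (∑ i, (u i - v i) ^ 2) ≤ 2) x w} with hSdef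
  have hSi : S ⊆ innerBd A := fun w hw => hw.1
  have hSsubA : S ⊆ A := fun w hw => (hSi hw).1
  have hScl : ∀ p q : Site d, p ∈ innerBd A → q ∈ innerBd A → SC.sq2 p q ≤ 2 →
      (p ∈ S ↔ q ∈ S) := by
    intro p q hp hq hpq
    constructor
    · rintro ⟨_, hr⟩
      exact ⟨hq, hr.tail ⟨hp, hq, hpq⟩⟩
    · rintro ⟨_, hr⟩
      have hqp : SC.sq2 q p ≤ 2 := by rw [SC.sq2_comm]; exact hpq
      exact ⟨hp, hr.tail ⟨hq, hp, hqp⟩⟩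
  have hsq : SC.SqEven A S := SC.sqEven_of hSi hScl
  obtain ⟨hxA, bx, hbxA, hadjx⟩ := hx
  obtain ⟨hyA, by', hbyA, hadjy⟩ := hy
  have hxS : x ∈ S := ⟨⟨hxA, bx, hbxA, hadjx⟩, Relation.ReflTransGen.refl⟩
  have e1 : SC.F A S x = SC.F A S y :=
    SC.F_const hsq (fun u v hu hv => SC.crossZ_uniform hSsubA (iff_of_true hu hv))
      (hconn x hxA y hyA)
  have e2 : SC.F A S bx = SC.F A S by' :=
    SC.F_const hsq (fun u v hu hv => SC.crossZ_uniform hSsubA (iff_of_false hu hv))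
      (hconnc bx hbxA by' hbyA)
  have e3 : SC.F A S x + SC.F A S bx = SC.crossZ A S x bx := SC.Fadj hsq hadjx
  have e4 : SC.F A S y + SC.F A S by' = SC.crossZ A S y by' := SC.Fadj hsq hadjy
  have c3 : SC.crossZ A S x bx = 1 := by
    unfold SC.crossZ SC.cross
    rw [if_pos (Or.inl ⟨hxS, hbxA⟩)]
  have hyS : y ∈ S := by
    by_contra hns
    have c4 : SC.crossZ A S y by' = 0 := by
      unfold SC.crossZ SC.cross
      rw [if_neg]
      rintro (⟨h1, _⟩ | ⟨h1, h2⟩)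
      · exact hns h1
      · exact h2 hyA
    have : (1 : ZMod 2) = 0 := by
      rw [← c3, ← e3, e1, e2, e4, c4]
    exact (by decide : (1 : ZMod 2) ≠ 0) this
  exact hyS.2
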